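/- (Sufficient decrease) Along any sequence generated by the algorithm, for every k ≥ 1 and i ∈ {1,…,n}, f(x^{k,i−1}) − f(x^{k,i}) ≥ (1/(2 L_i)) ‖∇_i f(x^{k,i−1})‖², where L_i = 4(|A_i| + |B_i|). -/

import Mathlib

open Finset Filter Topology InnerProductSpace
open scoped RealInnerProductSpace

noncomputable def obj {d n : ℕ} {J : Type*} (a : J → EuclideanSpace ℝ (Fin d))
    (A : Fin n → Finset J) (dhat : Fin n → J → ℝ)
    (B : Fin n → Finset (Fin n)) (lhat : Fin n → Fin n → ℝ)
    (x : Fin n → EuclideanSpace ℝ (Fin d)) : ℝ :=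
  (∑ i, ∑ j ∈ A i, max (‖x i - a j‖ - dhat i j) 0 ^ 2)
    + (1 / 2) * ∑ i, ∑ q ∈ B i, max (‖x i - x q‖ - lhat i q) 0 ^ 2

noncomputable def projBall {d : ℕ} (a : EuclideanSpace ℝ (Fin d)) (r : ℝ)
    (z : EuclideanSpace ℝ (Fin d)) : EuclideanSpace ℝ (Fin d) :=
  if ‖z - a‖ ≤ r then z else a + (r / ‖z - a‖) • (z - a)

/-- Partial gradient of `f` with respect to the `i`-th block. -/
noncomputable def blockGrad {d n : ℕ} (f : (Fin n → EuclideanSpace ℝ (Fin d)) → ℝ)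
    (i : Fin n) (x : Fin n → EuclideanSpace ℝ (Fin d)) : EuclideanSpace ℝ (Fin d) :=
  gradient (fun y => f (Function.update x i y)) (x i)

/-- The Coop. PPM algorithm: `X (k+1)` is obtained from `X k` by updating the
blocks successively for `i = 1, …, n`. -/
def IsPPM {d n : ℕ} {J : Type*} (a : J → EuclideanSpace ℝ (Fin d))
    (A : Fin n → Finset J) (dhat : Fin n → J → ℝ)
    (B : Fin n → Finset (Fin n)) (lhat : Fin n → Fin n → ℝ)
    (X : ℕ → Fin n → EuclideanSpace ℝ (Fin d)) : Prop :=
  ∀ (k : ℕ) (i : Fin n),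
    X (k + 1) i = (1 / 2 : ℝ) • X k i
      + (1 / (2 * (((A i).card : ℝ) + ((B i).card : ℝ)))) •
        ((∑ j ∈ A i, projBall (a j) (dhat i j) (X k i))
          + ∑ q ∈ B i, projBall (if q < i then X (k + 1) q else X k q) (lhat i q) (X k i))

/-- The intermediate configuration `x^{k+1, m}`: the first `m` blocks are those of
`X (k+1)` and the remaining blocks are those of `X k`. -/
def interm {d n : ℕ} (X : ℕ → Fin n → EuclideanSpace ℝ (Fin d)) (k m : ℕ) :
    Fin n → EuclideanSpace ℝ (Fin d) :=
  fun t => if (t : ℕ) < m then X (k + 1) t else X k t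

-- ===== auxiliary lemmas =====

lemma projBall_dist {d : ℕ} {r : ℝ} (hr : 0 ≤ r) (c x : EuclideanSpace ℝ (Fin d)) :
    ‖projBall c r x - c‖ ≤ r := by
  unfold projBall
  split_ifs with h
  · exact h
  · push_neg at h
    have hx : 0 < ‖x - c‖ := lt_of_le_of_lt hr h
    rw [add_sub_cancel_left, norm_smul, Real.norm_eq_abs, abs_div,
      abs_of_nonneg hr, abs_of_pos hx, div_mul_cancel₀ _ hx.ne']

lemma norm_sub_projBall {d : ℕ} {r : ℝ} (hr : 0 ≤ r) (c x : EuclideanSpace ℝ (Fin d)) :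
    ‖x - projBall c r x‖ = max (‖x - c‖ - r) 0 := by
  unfold projBall
  split_ifs with h
  · simp [max_eq_right, sub_nonpos.2 h]
  · push_neg at h
    have hx : 0 < ‖x - c‖ := lt_of_le_of_lt hr h
    have : x - (c + (r / ‖x - c‖) • (x - c)) = (1 - r / ‖x - c‖) • (x - c) := by
      module
    rw [this, norm_smul, Real.norm_eq_abs]
    rw [abs_of_nonneg (by rw [sub_nonneg]; exact (div_le_one hx).2 h.le)]
    rw [max_eq_left (by linarith)]
    field_simp

lemma key_ineq {d : ℕ} {r : ℝ} (hr : 0 ≤ r) (c x h : EuclideanSpace ℝ (Fin d)) :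
    max (‖x + h - c‖ - r) 0 ^ 2 ≤ max (‖x - c‖ - r) 0 ^ 2
      + ⟪(2:ℝ) • (x - projBall c r x), h⟫ + ‖h‖ ^ 2 := by
  set P := projBall c r x with hP
  have h1 : max (‖x + h - c‖ - r) 0 ≤ ‖x + h - P‖ := by
    apply max_le _ (norm_nonneg _)
    have h2 : ‖x + h - c‖ ≤ ‖x + h - P‖ + ‖P - c‖ := norm_sub_le_norm_sub_add_norm_sub _ _ _
    have := projBall_dist hr c x
    linarith
  have h3 : max (‖x + h - c‖ - r) 0 ^ 2 ≤ ‖x + h - P‖ ^ 2 := by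
    apply pow_le_pow_left₀ (le_max_right _ _) h1
  have h4 : x + h - P = (x - P) + h := by abel
  have h5 : ‖(x - P) + h‖ ^ 2 = ‖x - P‖ ^ 2 + 2 * ⟪x - P, h⟫ + ‖h‖ ^ 2 :=
    norm_add_sq_real _ _
  rw [real_inner_smul_left, norm_sub_projBall hr c x] at *
  calc max (‖x + h - c‖ - r) 0 ^ 2 ≤ ‖x + h - P‖ ^ 2 := h3
    _ = max (‖x - c‖ - r) 0 ^ 2 + 2 * ⟪x - P, h⟫ + ‖h‖ ^ 2 := by
        rw [h4, h5]
    _ = _ := by ring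

lemma hasGradientAt_of_inner {d : ℕ} {f : EuclideanSpace ℝ (Fin d) → ℝ}
    {D : EuclideanSpace ℝ (Fin d) →L[ℝ] ℝ} {g x : EuclideanSpace ℝ (Fin d)}
    (hD : HasFDerivAt f D x) (hg : ∀ v, D v = ⟪g, v⟫) : HasGradientAt f g x := by
  rw [hasGradientAt_iff_hasFDerivAt]
  have hE : toDual ℝ (EuclideanSpace ℝ (Fin d)) g = D := by
    ext v
    rw [toDual_apply_apply, hg v]
  rw [hE]; exact hD

lemma hasGradientAt_term {d : ℕ} {r : ℝ} (hr : 0 ≤ r) (c x : EuclideanSpace ℝ (Fin d)) :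
    HasGradientAt (fun y => max (‖y - c‖ - r) 0 ^ 2)
      ((2:ℝ) • (x - projBall c r x)) x := by
  by_cases hx : ‖x - c‖ ≤ r
  · have hPx : projBall c r x = x := by simp [projBall, hx]
    rw [hPx, sub_self, smul_zero]
    rw [hasGradientAt_iff_hasFDerivAt, map_zero,
      hasFDerivAt_iff_isLittleO, Asymptotics.isLittleO_iff]
    intro ε hε
    have hball : Metric.ball x ε ∈ 𝓝 x := Metric.ball_mem_nhds x hε
    filter_upwards [hball] with y hy
    have h0 : max (‖x - c‖ - r) 0 = 0 := max_eq_right (by linarith)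
    have h1 : max (‖y - c‖ - r) 0 ≤ ‖y - x‖ := by
      apply max_le _ (norm_nonneg _)
      have : ‖y - c‖ ≤ ‖y - x‖ + ‖x - c‖ := norm_sub_le_norm_sub_add_norm_sub _ _ _
      linarith
    have h2 : max (‖y - c‖ - r) 0 ^ 2 ≤ ‖y - x‖ * ‖y - x‖ := by
      rw [← sq]
      exact pow_le_pow_left₀ (le_max_right _ _) h1 2
    have h3 : ‖y - x‖ < ε := by rwa [← dist_eq_norm, ← Metric.mem_ball]
    simp only [ContinuousLinearMap.zero_apply, sub_zero, h0]
    norm_num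
    nlinarith [norm_nonneg (y - x), le_max_right (‖y - c‖ - r) (0:ℝ)]
  · push_neg at hx
    have hR : 0 < ‖x - c‖ := lt_of_le_of_lt hr hx
    have hne : x - c ≠ 0 := by intro h; rw [h, norm_zero] at hR; exact lt_irrefl _ hR
    -- derivative of ‖y - c‖² 
    have h1 : HasFDerivAt (fun y : EuclideanSpace ℝ (Fin d) => ‖y - c‖ ^ 2)
        (2 • ((innerSL ℝ (x - c)).comp (ContinuousLinearMap.id ℝ _))) x := by
      have := ((hasFDerivAt_id x).sub_const c).norm_sq
      simpa using this
    have h2 := h1.sqrt (by positivity : ‖x - c‖ ^ 2 ≠ 0)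
    have h3 : (fun y : EuclideanSpace ℝ (Fin d) => Real.sqrt (‖y - c‖ ^ 2))
        = fun y => ‖y - c‖ := by
      funext y; exact Real.sqrt_sq (norm_nonneg _)
    rw [h3] at h2
    have hsq : Real.sqrt (‖x - c‖ ^ 2) = ‖x - c‖ := Real.sqrt_sq (norm_nonneg _)
    rw [hsq] at h2
    -- h2 : HasFDerivAt (fun y => ‖y - c‖) ((1 / (2 * ‖x-c‖)) • (2 • ...)) x
    have hout : HasDerivAt (fun t : ℝ => (t - r) ^ 2) (2 * (‖x - c‖ - r)) ‖x - c‖ := by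
      have := (((hasDerivAt_id (‖x - c‖)).sub_const r).fun_pow 2)
      simpa using this
    have h4 := hout.comp_hasFDerivAt x h2
    have h5 : HasGradientAt (fun y : EuclideanSpace ℝ (Fin d) => (‖y - c‖ - r) ^ 2)
        ((2:ℝ) • (x - projBall c r x)) x := by
      apply hasGradientAt_of_inner h4
      intro v
      have hPx : projBall c r x = c + (r / ‖x - c‖) • (x - c) := by
        simp [projBall, not_le.2 hx]
      rw [hPx]
      have hx2 : x - (c + (r / ‖x - c‖) • (x - c)) = (1 - r / ‖x - c‖) • (x - c) := by module
      rw [hx2, real_inner_smul_left, real_inner_smul_left]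
      simp only [ContinuousLinearMap.coe_smul', Pi.smul_apply, ContinuousLinearMap.smul_apply,
        ContinuousLinearMap.coe_comp', Function.comp_apply, ContinuousLinearMap.coe_id', id_eq,
        innerSL_apply_apply, smul_eq_mul]
      have hc : (2*(‖x - c‖-r)) * ((1/(2*‖x - c‖)) * 2) = 2*(1 - r/‖x - c‖) := by
        field_simp
      linear_combination (inner ℝ (x - c) v : ℝ) * hc
    apply h5.congr_of_eventuallyEq
    have hopen : IsOpen {y : EuclideanSpace ℝ (Fin d) | r < ‖y - c‖} :=
      isOpen_lt continuous_const ((continuous_id.sub continuous_const).norm)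
    filter_upwards [hopen.mem_nhds hx] with y hy
    rw [max_eq_left (sub_nonneg.2 (le_of_lt hy))]

lemma hasGradientAt_sum {d : ℕ} {ι : Type*} (s : Finset ι)
    (f : ι → EuclideanSpace ℝ (Fin d) → ℝ) (g : ι → EuclideanSpace ℝ (Fin d))
    (x : EuclideanSpace ℝ (Fin d)) (h : ∀ j ∈ s, HasGradientAt (f j) (g j) x) :
    HasGradientAt (fun y => ∑ j ∈ s, f j y) (∑ j ∈ s, g j) x := by
  have hs := HasFDerivAt.fun_sum (fun j hj => (h j hj).hasFDerivAt)
  rw [hasGradientAt_iff_hasFDerivAt, map_sum]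
  exact hs

lemma obj_update {d n : ℕ} {J : Type*} [Fintype J] (a : J → EuclideanSpace ℝ (Fin d))
    (A : Fin n → Finset J) (dhat : Fin n → J → ℝ)
    (B : Fin n → Finset (Fin n)) (lhat : Fin n → Fin n → ℝ)
    (hBirr : ∀ i : Fin n, i ∉ B i)
    (hBsymm : ∀ i q : Fin n, q ∈ B i ↔ i ∈ B q)
    (hlsymm : ∀ i q : Fin n, lhat i q = lhat q i)
    (w : Fin n → EuclideanSpace ℝ (Fin d)) (i : Fin n) (y : EuclideanSpace ℝ (Fin d)) :
    obj a A dhat B lhat (Function.update w i y)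
      = ((∑ j ∈ A i, max (‖y - a j‖ - dhat i j) 0 ^ 2)
          + ∑ q ∈ B i, max (‖y - w q‖ - lhat i q) 0 ^ 2)
        + ((∑ t ∈ univ.erase i, ∑ j ∈ A t, max (‖w t - a j‖ - dhat t j) 0 ^ 2)
          + (1 / 2) * ∑ t ∈ univ.erase i, ∑ q ∈ (B t).erase i,
              max (‖w t - w q‖ - lhat t q) 0 ^ 2) := by
  set u := Function.update w i y with hu
  have hui : u i = y := Function.update_self i y w
  have hut : ∀ t : Fin n, t ≠ i → u t = w t := fun t ht => Function.update_of_ne ht y w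
  -- first sum
  have hS1 : (∑ t, ∑ j ∈ A t, max (‖u t - a j‖ - dhat t j) 0 ^ 2)
      = (∑ j ∈ A i, max (‖y - a j‖ - dhat i j) 0 ^ 2)
        + ∑ t ∈ univ.erase i, ∑ j ∈ A t, max (‖w t - a j‖ - dhat t j) 0 ^ 2 := by
    rw [← Finset.add_sum_erase univ _ (mem_univ i), hui]
    congr 1
    apply Finset.sum_congr rfl
    intro t ht
    rw [hut t (Finset.ne_of_mem_erase ht)]
  -- second sum
  have hS2 : (∑ t, ∑ q ∈ B t, max (‖u t - u q‖ - lhat t q) 0 ^ 2)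
      = 2 * (∑ q ∈ B i, max (‖y - w q‖ - lhat i q) 0 ^ 2)
        + ∑ t ∈ univ.erase i, ∑ q ∈ (B t).erase i, max (‖w t - w q‖ - lhat t q) 0 ^ 2 := by
    rw [← Finset.add_sum_erase univ _ (mem_univ i), hui]
    have hti : ∀ q ∈ B i, u q = w q := fun q hq =>
      hut q (fun h => hBirr i (h ▸ hq))
    have e1 : (∑ q ∈ B i, max (‖y - u q‖ - lhat i q) 0 ^ 2)
        = ∑ q ∈ B i, max (‖y - w q‖ - lhat i q) 0 ^ 2 := by
      apply Finset.sum_congr rfl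
      intro q hq
      rw [hti q hq]
    have e2 : ∀ t ∈ univ.erase i, (∑ q ∈ B t, max (‖u t - u q‖ - lhat t q) 0 ^ 2)
        = (∑ q ∈ (B t).erase i, max (‖w t - w q‖ - lhat t q) 0 ^ 2)
          + (if i ∈ B t then max (‖y - w t‖ - lhat i t) 0 ^ 2 else 0) := by
      intro t ht
      have htne : t ≠ i := Finset.ne_of_mem_erase ht
      have hterm : ∀ q ∈ (B t).erase i, max (‖u t - u q‖ - lhat t q) 0 ^ 2
          = max (‖w t - w q‖ - lhat t q) 0 ^ 2 := by
        intro q hq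
        rw [hut t htne, hut q (Finset.ne_of_mem_erase hq)]
      by_cases hit : i ∈ B t
      · have h1 : max (‖u t - u i‖ - lhat t i) 0 ^ 2 = max (‖y - w t‖ - lhat i t) 0 ^ 2 := by
          rw [hut t htne, hui, norm_sub_rev, hlsymm t i]
        have h2 : (∑ q ∈ (B t).erase i, max (‖u t - u q‖ - lhat t q) 0 ^ 2)
            = ∑ q ∈ (B t).erase i, max (‖w t - w q‖ - lhat t q) 0 ^ 2 :=
          Finset.sum_congr rfl hterm
        rw [if_pos hit, ← Finset.add_sum_erase (B t) _ hit, h1, h2, add_comm]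
      · rw [if_neg hit, add_zero]
        conv_lhs => rw [← Finset.erase_eq_of_notMem hit]
        exact Finset.sum_congr rfl hterm
    rw [Finset.sum_congr rfl e2, Finset.sum_add_distrib]
    have e3 : (∑ t ∈ univ.erase i, if i ∈ B t then max (‖y - w t‖ - lhat i t) 0 ^ 2 else 0)
        = ∑ q ∈ B i, max (‖y - w q‖ - lhat i q) 0 ^ 2 := by
      have hsw : ∀ t ∈ univ.erase i,
          (if i ∈ B t then max (‖y - w t‖ - lhat i t) 0 ^ 2 else 0)
            = (if t ∈ B i then max (‖y - w t‖ - lhat i t) 0 ^ 2 else 0) := by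
        intro t _
        simp only [hBsymm i t]
      rw [Finset.sum_congr rfl hsw, Finset.sum_ite_mem]
      have hin : (univ.erase i) ∩ B i = B i := by
        ext q
        constructor
        · intro h
          exact (Finset.mem_inter.1 h).2
        · intro hq
          refine Finset.mem_inter.2 ⟨Finset.mem_erase.2 ⟨?_, Finset.mem_univ q⟩, hq⟩
          intro h
          rw [h] at hq
          exact hBirr i hq
      rw [hin]
    rw [e3, e1]
    ring
  rw [obj, hS1, hS2]
  ring

lemma hasGradientAt_add {d : ℕ} {f h : EuclideanSpace ℝ (Fin d) → ℝ}
    {gf gh x : EuclideanSpace ℝ (Fin d)} (hf : HasGradientAt f gf x)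
    (hh : HasGradientAt h gh x) :
    HasGradientAt (fun y => f y + h y) (gf + gh) x := by
  rw [hasGradientAt_iff_hasFDerivAt, map_add]
  exact hf.hasFDerivAt.add hh.hasFDerivAt

lemma hasGradientAt_add_const {d : ℕ} {f : EuclideanSpace ℝ (Fin d) → ℝ}
    {gf x : EuclideanSpace ℝ (Fin d)} (hf : HasGradientAt f gf x) (C : ℝ) :
    HasGradientAt (fun y => f y + C) gf x := by
  rw [hasGradientAt_iff_hasFDerivAt] at hf ⊢
  exact hf.add_const C

set_option maxHeartbeats 1600000 in
theorem stmt12 (d n : ℕ) (hd : 1 ≤ d) (hn : 1 ≤ n) {J : Type*} [Fintype J]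
    (a : J → EuclideanSpace ℝ (Fin d))
    (A : Fin n → Finset J) (dhat : Fin n → J → ℝ)
    (B : Fin n → Finset (Fin n)) (lhat : Fin n → Fin n → ℝ)
    (hdhat : ∀ i, ∀ j ∈ A i, 0 ≤ dhat i j)
    (hlhat : ∀ i, ∀ q ∈ B i, 0 ≤ lhat i q)
    (hBirr : ∀ i : Fin n, i ∉ B i)
    (hBsymm : ∀ i q : Fin n, q ∈ B i ↔ i ∈ B q)
    (hlsymm : ∀ i q : Fin n, lhat i q = lhat q i)
    (hcard : ∀ i : Fin n, 1 ≤ (A i).card + (B i).card)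
    (X : ℕ → Fin n → EuclideanSpace ℝ (Fin d))
    (hX : IsPPM a A dhat B lhat X) :
    ∀ (k : ℕ) (i : Fin n),
      (1 / (2 * (4 * (((A i).card : ℝ) + ((B i).card : ℝ))))) *
          ‖blockGrad (obj a A dhat B lhat) i (interm X k (i : ℕ))‖ ^ 2
        ≤ obj a A dhat B lhat (interm X k (i : ℕ))
            - obj a A dhat B lhat (interm X k ((i : ℕ) + 1)) := by
  intro k i
  have h := hX k i
  set m : ℝ := ((A i).card : ℝ) + ((B i).card : ℝ) with hmdef
  have hm : (1:ℝ) ≤ m := by rw [hmdef]; exact_mod_cast hcard i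
  have hmpos : (0:ℝ) < m := lt_of_lt_of_le zero_lt_one hm
  have hm0 : m ≠ 0 := hmpos.ne'
  set w : Fin n → EuclideanSpace ℝ (Fin d) := interm X k (i : ℕ) with hw
  set x : EuclideanSpace ℝ (Fin d) := X k i with hx
  set xp : EuclideanSpace ℝ (Fin d) := X (k + 1) i with hxp
  have hwi : w i = x := by
    rw [hw]
    show (if (i : ℕ) < (i : ℕ) then X (k + 1) i else X k i) = x
    rw [if_neg (lt_irrefl _)]
  set g : EuclideanSpace ℝ (Fin d) :=
    (∑ j ∈ A i, (2:ℝ) • (x - projBall (a j) (dhat i j) x))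
      + ∑ q ∈ B i, (2:ℝ) • (x - projBall (w q) (lhat i q) x) with hg
  -- gradient computation
  have hgrad : HasGradientAt (fun y => obj a A dhat B lhat (Function.update w i y)) g x := by
    have hA := hasGradientAt_sum (A i)
      (fun j y => max (‖y - a j‖ - dhat i j) 0 ^ 2)
      (fun j => (2:ℝ) • (x - projBall (a j) (dhat i j) x)) x
      (fun j hj => hasGradientAt_term (hdhat i j hj) (a j) x)
    have hB := hasGradientAt_sum (B i)
      (fun q y => max (‖y - w q‖ - lhat i q) 0 ^ 2)
      (fun q => (2:ℝ) • (x - projBall (w q) (lhat i q) x)) x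
      (fun q hq => hasGradientAt_term (hlhat i q hq) (w q) x)
    have h12 := hasGradientAt_add hA hB
    have h13 := hasGradientAt_add_const h12
      ((∑ t ∈ univ.erase i, ∑ j ∈ A t, max (‖w t - a j‖ - dhat t j) 0 ^ 2)
        + (1 / 2) * ∑ t ∈ univ.erase i, ∑ q ∈ (B t).erase i,
            max (‖w t - w q‖ - lhat t q) 0 ^ 2)
    have hfun : (fun y => obj a A dhat B lhat (Function.update w i y))
        = fun y => (((∑ j ∈ A i, max (‖y - a j‖ - dhat i j) 0 ^ 2)
          + ∑ q ∈ B i, max (‖y - w q‖ - lhat i q) 0 ^ 2)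
        + ((∑ t ∈ univ.erase i, ∑ j ∈ A t, max (‖w t - a j‖ - dhat t j) 0 ^ 2)
          + (1 / 2) * ∑ t ∈ univ.erase i, ∑ q ∈ (B t).erase i,
              max (‖w t - w q‖ - lhat t q) 0 ^ 2)) :=
      funext fun y => obj_update a A dhat B lhat hBirr hBsymm hlsymm w i y
    rw [hfun]
    exact h13
  have hbg : blockGrad (obj a A dhat B lhat) i w = g := by
    rw [blockGrad, hwi]
    exact hgrad.gradient
  -- the update is a gradient step
  have hcent : (∑ q ∈ B i, projBall (if q < i then X (k + 1) q else X k q) (lhat i q) x)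
      = ∑ q ∈ B i, projBall (w q) (lhat i q) x := by
    apply Finset.sum_congr rfl
    intro q hq
    rfl
  have hstep : xp - x = (-(1/(4*m))) • g := by
    rw [hcent] at h
    have e1 : (∑ j ∈ A i, (2:ℝ) • (x - projBall (a j) (dhat i j) x))
        = ((A i).card) • ((2:ℝ) • x) - (2:ℝ) • ∑ j ∈ A i, projBall (a j) (dhat i j) x := by
      simp only [smul_sub]
      rw [Finset.sum_sub_distrib, Finset.sum_const, ← Finset.smul_sum]
    have e2 : (∑ q ∈ B i, (2:ℝ) • (x - projBall (w q) (lhat i q) x))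
        = ((B i).card) • ((2:ℝ) • x) - (2:ℝ) • ∑ q ∈ B i, projBall (w q) (lhat i q) x := by
      simp only [smul_sub]
      rw [Finset.sum_sub_distrib, Finset.sum_const, ← Finset.smul_sum]
    have hgsum : g = (2*m) • x - (2:ℝ) • ((∑ j ∈ A i, projBall (a j) (dhat i j) x)
        + ∑ q ∈ B i, projBall (w q) (lhat i q) x) := by
      rw [hg, e1, e2, hmdef]
      module
    rw [h, hgsum]
    have c1 : -(1/(4*m)) * (2*m) = -(1/2 : ℝ) := by
      field_simp
      ring
    have c2 : -(1/(4*m)) * 2 = -(1/(2*m)) := by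
      rw [neg_mul, neg_eq_iff_eq_neg, neg_neg]
      rw [div_mul_eq_mul_div, one_mul,
        div_eq_div_iff (by nlinarith : (0:ℝ) < 4*m).ne' (by nlinarith : (0:ℝ) < 2*m).ne']
      ring
    rw [smul_sub, smul_smul, smul_smul, c1, c2]
    module
  -- descent inequality
  have hdec : obj a A dhat B lhat (Function.update w i xp)
      ≤ obj a A dhat B lhat (Function.update w i x) + ⟪g, xp - x⟫ + m * ‖xp - x‖ ^ 2 := by
    set h0 : EuclideanSpace ℝ (Fin d) := xp - x with hh0
    have hxpx : xp = x + h0 := by rw [hh0]; abel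
    rw [obj_update a A dhat B lhat hBirr hBsymm hlsymm w i xp,
      obj_update a A dhat B lhat hBirr hBsymm hlsymm w i x]
    have tA : (∑ j ∈ A i, max (‖xp - a j‖ - dhat i j) 0 ^ 2)
        ≤ ∑ j ∈ A i, (max (‖x - a j‖ - dhat i j) 0 ^ 2
            + ⟪(2:ℝ) • (x - projBall (a j) (dhat i j) x), h0⟫ + ‖h0‖ ^ 2) := by
      apply Finset.sum_le_sum
      intro j hj
      rw [hxpx]
      exact key_ineq (hdhat i j hj) (a j) x h0
    have tB : (∑ q ∈ B i, max (‖xp - w q‖ - lhat i q) 0 ^ 2)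
        ≤ ∑ q ∈ B i, (max (‖x - w q‖ - lhat i q) 0 ^ 2
            + ⟪(2:ℝ) • (x - projBall (w q) (lhat i q) x), h0⟫ + ‖h0‖ ^ 2) := by
      apply Finset.sum_le_sum
      intro q hq
      rw [hxpx]
      exact key_ineq (hlhat i q hq) (w q) x h0
    have eA : (∑ j ∈ A i, (max (‖x - a j‖ - dhat i j) 0 ^ 2
            + ⟪(2:ℝ) • (x - projBall (a j) (dhat i j) x), h0⟫ + ‖h0‖ ^ 2))
        = (∑ j ∈ A i, max (‖x - a j‖ - dhat i j) 0 ^ 2)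
          + ⟪∑ j ∈ A i, (2:ℝ) • (x - projBall (a j) (dhat i j) x), h0⟫
          + ((A i).card : ℝ) * ‖h0‖ ^ 2 := by
      rw [Finset.sum_add_distrib, Finset.sum_add_distrib, sum_inner, Finset.sum_const,
        nsmul_eq_mul]
    have eB : (∑ q ∈ B i, (max (‖x - w q‖ - lhat i q) 0 ^ 2
            + ⟪(2:ℝ) • (x - projBall (w q) (lhat i q) x), h0⟫ + ‖h0‖ ^ 2))
        = (∑ q ∈ B i, max (‖x - w q‖ - lhat i q) 0 ^ 2)
          + ⟪∑ q ∈ B i, (2:ℝ) • (x - projBall (w q) (lhat i q) x), h0⟫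
          + ((B i).card : ℝ) * ‖h0‖ ^ 2 := by
      rw [Finset.sum_add_distrib, Finset.sum_add_distrib, sum_inner, Finset.sum_const,
        nsmul_eq_mul]
    have hginner : ⟪g, h0⟫
        = ⟪∑ j ∈ A i, (2:ℝ) • (x - projBall (a j) (dhat i j) x), h0⟫
          + ⟪∑ q ∈ B i, (2:ℝ) • (x - projBall (w q) (lhat i q) x), h0⟫ := by
      rw [hg, inner_add_left]
    rw [eA] at tA
    rw [eB] at tB
    have hmsplit : m * ‖h0‖ ^ 2 = ((A i).card : ℝ) * ‖h0‖ ^ 2 + ((B i).card : ℝ) * ‖h0‖ ^ 2 := by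
      rw [hmdef]; ring
    linarith [tA, tB, hginner, hmsplit]
  -- endpoints
  have hend0 : obj a A dhat B lhat w = obj a A dhat B lhat (Function.update w i x) := by
    rw [← hwi, Function.update_eq_self]
  have hend1 : interm X k ((i : ℕ) + 1) = Function.update w i xp := by
    funext t
    by_cases ht : t = i
    · rw [ht, Function.update_self]
      show (if (i : ℕ) < (i : ℕ) + 1 then X (k + 1) i else X k i) = xp
      rw [if_pos (Nat.lt_succ_self _)]
    · rw [Function.update_of_ne ht, hw]
      show (if (t : ℕ) < (i : ℕ) + 1 then X (k + 1) t else X k t)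
        = (if (t : ℕ) < (i : ℕ) then X (k + 1) t else X k t)
      have htne : (t : ℕ) ≠ (i : ℕ) := fun hh => ht (Fin.ext hh)
      by_cases hlt : (t : ℕ) < (i : ℕ)
      · rw [if_pos hlt, if_pos (by omega)]
      · rw [if_neg hlt, if_neg (by omega)]
  -- final arithmetic
  have hGnn : (0:ℝ) ≤ ‖g‖ ^ 2 := by positivity
  have hip : ⟪g, xp - x⟫ = -(1/(4*m)) * ‖g‖ ^ 2 := by
    rw [hstep, real_inner_smul_right, real_inner_self_eq_norm_sq]
  have hns : ‖xp - x‖ ^ 2 = (1/(4*m))^2 * ‖g‖ ^ 2 := by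
    rw [hstep, norm_smul, Real.norm_eq_abs, mul_pow, sq_abs, neg_sq]
  rw [hbg, hend1, hend0]
  have e16 : m * (1/(4*m))^2 = 1/(16*m) := by
    rw [div_pow, one_pow, mul_one_div,
      div_eq_div_iff (by nlinarith : (0:ℝ) < (4*m)^2).ne' (by nlinarith : (0:ℝ) < 16*m).ne']
    ring
  have key : (1/(4*m)) - m * (1/(4*m))^2 = 3/(16*m) := by
    rw [e16, div_sub_div _ _ (by nlinarith : (4*m) ≠ (0:ℝ)) (by nlinarith : (16*m) ≠ (0:ℝ)),
      div_eq_div_iff (by nlinarith : (0:ℝ) < 4*m*(16*m)).ne' (by nlinarith : (0:ℝ) < 16*m).ne']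
    ring
  have hco : 1 / (2 * (4 * m)) ≤ 3/(16*m) := by
    rw [div_le_div_iff₀ (by nlinarith : (0:ℝ) < 2*(4*m)) (by nlinarith : (0:ℝ) < 16*m)]
    nlinarith [hm]
  have hmain : obj a A dhat B lhat (Function.update w i x)
      - obj a A dhat B lhat (Function.update w i xp)
      ≥ (3/(16*m)) * ‖g‖ ^ 2 := by
    rw [hip, hns] at hdec
    have e : (1/(4*m)) * ‖g‖ ^ 2 - m * ((1/(4*m))^2 * ‖g‖ ^ 2)
        = ((1/(4*m)) - m * (1/(4*m))^2) * ‖g‖ ^ 2 := by ring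
    rw [key] at e
    nlinarith [hdec, e]
  have : (1 / (2 * (4 * m))) * ‖g‖ ^ 2 ≤ (3/(16*m)) * ‖g‖ ^ 2 :=
    mul_le_mul_of_nonneg_right hco hGnn
  linarith
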